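/- If a Laurent polynomial p(t) ∈ Q(√5)[t^{±1}] of the form p(t) = α(t⁴+1) + β(t³+t) + γt² (with α ≠ 0) has four distinct real roots when Q(√5) is embedded in ℝ, and p(t) = λ·t^j·f(t)·f̄(t⁻¹) with f ∈ Q(ζ₅)[t^{±1}] and f̄ coefficientwise complex conjugation, then p(t) already factors as μ·(at²+bt+c)(ct²+bt+a) with μ, a, b, c ∈ Q(√5) = Q(ζ₅) ∩ ℝ. -/

import Mathlib

open Polynomial

lemma rev_quad (a b c : ℂ) (ha : a ≠ 0) :
    (C a * X ^ 2 + C b * X + C c).reverse = C c * X ^ 2 + C b * X + C a := by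
  have hnd : (C a * X ^ 2 + C b * X + C c).natDegree = 2 := by
    compute_degree!
  unfold Polynomial.reverse
  rw [hnd]
  have h : C a * X ^ 2 + C b * X + C c = C a * X ^ 2 + C b * X ^ 1 + C c * X ^ 0 := by
    ring
  rw [h, reflect_add, reflect_add, reflect_C_mul_X_pow, reflect_C_mul_X_pow,
    reflect_C_mul_X_pow]
  norm_num [revAt_le]
  ring

lemma conj_zeta (ζ : ℂ) (hζ : IsPrimitiveRoot ζ 5) : (starRingEnd ℂ) ζ = ζ ^ 4 := by
  have h5 : ζ ^ 5 = 1 := hζ.pow_eq_one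
  have hne : ζ ≠ 0 := by
    intro h; rw [h] at h5; simp at h5
  have habs : ‖ζ‖ = 1 := Complex.norm_eq_one_of_pow_eq_one h5 (by norm_num)
  have h1 : (starRingEnd ℂ) ζ * ζ = 1 := by
    rw [mul_comm, Complex.mul_conj]
    simp [← Complex.sq_norm, habs]
  have h2 : ζ ^ 4 * ζ = 1 := by rw [← pow_succ]; exact h5
  exact mul_right_cancel₀ hne (h1.trans h2.symm)

lemma conj_mem (ζ : ℂ) (hζ : IsPrimitiveRoot ζ 5) (x : ℂ)
    (hx : x ∈ Algebra.adjoin ℚ ({ζ} : Set ℂ)) :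
    (starRingEnd ℂ) x ∈ Algebra.adjoin ℚ ({ζ} : Set ℂ) := by
  refine Algebra.adjoin_induction ?_ ?_ ?_ ?_ hx
  · intro y hy
    have hy' : y = ζ := hy
    rw [hy', conj_zeta _ hζ]
    exact pow_mem (Algebra.self_mem_adjoin_singleton ℚ ζ) 4
  · intro r
    simpa using Subalgebra.algebraMap_mem (Algebra.adjoin ℚ ({ζ} : Set ℂ)) r
  · intro x y _ _ hx hy
    rw [map_add]; exact add_mem hx hy
  · intro x y _ _ hx hy
    rw [map_mul]; exact mul_mem hx hy

lemma inv_mem' (ζ : ℂ) (hζ : IsPrimitiveRoot ζ 5) (x : ℂ)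
    (hx : x ∈ Algebra.adjoin ℚ ({ζ} : Set ℂ)) :
    x⁻¹ ∈ Algebra.adjoin ℚ ({ζ} : Set ℂ) := by
  have halg : ∀ y ∈ ({ζ} : Set ℂ), IsAlgebraic ℚ y := by
    rintro y rfl
    refine ⟨X ^ 5 - 1, ?_, by simp [hζ.pow_eq_one]⟩
    intro h
    have := congrArg (fun q => q.coeff 5) h
    simp [coeff_one, coeff_X] at this
  have hE := IntermediateField.adjoin_toSubalgebra_of_isAlgebraic halg
  have hx' : x ∈ (IntermediateField.adjoin ℚ ({ζ} : Set ℂ)).toSubalgebra := by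
    rw [hE]; exact hx
  have h2 := (IntermediateField.adjoin ℚ ({ζ} : Set ℂ)).inv_mem hx'
  rw [← hE]
  exact h2

lemma quad_eq_parts {a b c a' b' c' : ℂ}
    (h : C a * X ^ 2 + C b * X + C c = C a' * X ^ 2 + C b' * X + C c') :
    a = a' ∧ b = b' ∧ c = c' := by
  refine ⟨?_, ?_, ?_⟩
  · have := congrArg (fun q => Polynomial.coeff q 2) h
    simpa using this
  · have := congrArg (fun q => Polynomial.coeff q 1) h
    simpa using this
  · have := congrArg (fun q => Polynomial.coeff q 0) h
    simpa using this

/-- Let ζ₅ ∈ ℂ be a primitive 5th root of unity, so Q(ζ₅) ∩ ℝ = Q(√5).  If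
p(t) = α(t⁴+1) + β(t³+t) + γt² with α, β, γ ∈ Q(√5), α ≠ 0, has four distinct real roots
and is a norm, p(t) = λ·t^j·f(t)·f̄(t⁻¹) with f ∈ Q(ζ₅)[t^{±1}] (f̄ the coefficientwise
complex conjugate), then p factors as μ(at²+bt+c)(ct²+bt+a) with μ, a, b, c ∈ Q(√5). -/
theorem stmt_16 (ζ : ℂ) (hζ : IsPrimitiveRoot ζ 5) (α β γ : ℂ)
    (hα : α ∈ Algebra.adjoin ℚ ({ζ} : Set ℂ) ∧ α.im = 0)
    (hβ : β ∈ Algebra.adjoin ℚ ({ζ} : Set ℂ) ∧ β.im = 0)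
    (hγ : γ ∈ Algebra.adjoin ℚ ({ζ} : Set ℂ) ∧ γ.im = 0)
    (hα0 : α ≠ 0)
    (p : Polynomial ℂ)
    (hp : p = C α * (X ^ 4 + 1) + C β * (X ^ 3 + X) + C γ * X ^ 2)
    (hroots : ∃ r₁ r₂ r₃ r₄ : ℝ, r₁ ≠ r₂ ∧ r₁ ≠ r₃ ∧ r₁ ≠ r₄ ∧ r₂ ≠ r₃ ∧ r₂ ≠ r₄ ∧
      r₃ ≠ r₄ ∧ p.eval (r₁ : ℂ) = 0 ∧ p.eval (r₂ : ℂ) = 0 ∧ p.eval (r₃ : ℂ) = 0 ∧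
      p.eval (r₄ : ℂ) = 0)
    (hnorm : ∃ (lam : ℂ) (f : Polynomial ℂ) (u v : ℕ),
      (∀ i, f.coeff i ∈ Algebra.adjoin ℚ ({ζ} : Set ℂ)) ∧
      X ^ u * p = C lam * X ^ v * (f * (f.map (starRingEnd ℂ)).reverse)) :
    ∃ μ a b c : ℂ,
      (μ ∈ Algebra.adjoin ℚ ({ζ} : Set ℂ) ∧ μ.im = 0) ∧
      (a ∈ Algebra.adjoin ℚ ({ζ} : Set ℂ) ∧ a.im = 0) ∧
      (b ∈ Algebra.adjoin ℚ ({ζ} : Set ℂ) ∧ b.im = 0) ∧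
      (c ∈ Algebra.adjoin ℚ ({ζ} : Set ℂ) ∧ c.im = 0) ∧
      p = C μ * ((C a * X ^ 2 + C b * X + C c) * (C c * X ^ 2 + C b * X + C a)) := by
  obtain ⟨r₁, r₂, r₃, r₄, h12, h13, h14, h23, h24, h34, e1, e2, e3, e4⟩ := hroots
  obtain ⟨lam, f, u, v, hfc, heq⟩ := hnorm
  -- basic facts about p
  have hpd : p.natDegree = 4 := by subst hp; compute_degree!
  have hpc4 : p.coeff 4 = α := by subst hp; simp [coeff_one, coeff_X]
  have hpc0 : p.coeff 0 = α := by subst hp; simp [coeff_one, coeff_X]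
  have hp0 : p ≠ 0 := fun h => hα0 (by rw [← hpc4, h]; simp)
  -- all roots of p are real
  have hreal : ∀ z : ℂ, p.eval z = 0 → z.im = 0 := by
    have hmem : ∀ z : ℂ, p.eval z = 0 → z ∈ p.roots := fun z hz =>
      (mem_roots').mpr ⟨hp0, hz⟩
    set s : Multiset ℂ := {(r₁ : ℂ), (r₂ : ℂ), (r₃ : ℂ), (r₄ : ℂ)} with hs
    have hnodup : s.Nodup := by
      simp only [hs, Multiset.insert_eq_cons, Multiset.nodup_cons, Multiset.mem_cons,
        Multiset.mem_singleton, Multiset.nodup_singleton, Complex.ofReal_inj]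
      refine ⟨?_, ?_, ?_, trivial⟩ <;> push_neg <;>
        simp [Complex.ofReal_inj] <;> tauto
    have hsub : s ⊆ p.roots := by
      intro x hx
      simp only [hs, Multiset.insert_eq_cons, Multiset.mem_cons, Multiset.mem_singleton] at hx
      rcases hx with rfl | rfl | rfl | rfl
      exacts [hmem _ e1, hmem _ e2, hmem _ e3, hmem _ e4]
    have hle : s ≤ p.roots := (Multiset.le_iff_subset hnodup).mpr hsub
    have hcard : Multiset.card p.roots ≤ 4 := by
      have := p.card_roots'
      omega
    have heqr : s = p.roots := Multiset.eq_of_le_of_card_le hle (by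
      simpa [hs] using hcard)
    intro z hz
    have := hmem z hz
    rw [← heqr] at this
    simp only [hs, Multiset.insert_eq_cons, Multiset.mem_cons, Multiset.mem_singleton] at this
    rcases this with rfl | rfl | rfl | rfl <;> simp
  -- strip powers of X from f
  have hf0 : f ≠ 0 := by
    intro h
    apply mul_ne_zero (pow_ne_zero u (X_ne_zero : (X : ℂ[X]) ≠ 0)) hp0
    rw [heq, h]; ring
  obtain ⟨g, hg, hgnd⟩ := f.exists_eq_pow_rootMultiplicity_mul_and_not_dvd hf0 0
  rw [map_zero, sub_zero] at hg hgnd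
  have hg0 : g ≠ 0 := fun h => hgnd (by rw [h]; exact dvd_zero _)
  have hgc0 : g.coeff 0 ≠ 0 := fun h => hgnd (X_dvd_iff.mpr h)
  set m := f.rootMultiplicity 0 with hm
  -- the equation with X powers stripped from f
  have heq2 : X ^ u * p = X ^ (v + m) * (C lam * (g * (g.map (starRingEnd ℂ)).reverse)) := by
    rw [heq, hg]
    rw [Polynomial.map_mul, Polynomial.map_pow, map_X, reverse_X_pow_mul]
    ring
  have hlam0 : lam ≠ 0 := by
    intro h
    apply mul_ne_zero (pow_ne_zero u (X_ne_zero : (X : ℂ[X]) ≠ 0)) hp0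
    rw [heq2, h]; simp
  obtain ⟨q, hqdef⟩ : ∃ q : ℂ[X], q = C lam * (g * (g.map (starRingEnd ℂ)).reverse) :=
    ⟨_, rfl⟩
  rw [← hqdef] at heq2
  have hgm0 : g.map (starRingEnd ℂ) ≠ 0 := by
    intro h
    apply hgc0
    have := congrArg (fun r => Polynomial.coeff r 0) h
    simp only [coeff_map, coeff_zero] at this
    exact (starRingEnd ℂ).injective (by simpa using this)
  have hrev0 : (g.map (starRingEnd ℂ)).reverse ≠ 0 := by
    rwa [Ne, reverse_eq_zero]
  have hq0 : q.coeff 0 ≠ 0 := by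
    rw [hqdef, mul_coeff_zero, mul_coeff_zero, coeff_zero_reverse, coeff_C]
    simp only [if_pos rfl]
    refine mul_ne_zero hlam0 (mul_ne_zero hgc0 ?_)
    rw [Ne, leadingCoeff_eq_zero]
    exact hgm0
  -- cancel the X powers: p = q
  have hpq : p = q := by
    rcases le_total u (v + m) with h | h
    · have hstep : X ^ u * p = X ^ u * (X ^ (v + m - u) * q) := by
        rw [heq2, ← mul_assoc, ← pow_add, Nat.add_sub_cancel' h]
      have hpq' : p = X ^ (v + m - u) * q :=
        mul_left_cancel₀ (pow_ne_zero _ (X_ne_zero : (X : ℂ[X]) ≠ 0)) hstep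
      rcases Nat.eq_zero_or_pos (v + m - u) with h0 | h0
      · rwa [h0, pow_zero, one_mul] at hpq'
      · exfalso
        apply hα0
        rw [← hpc0, hpq', mul_coeff_zero, coeff_X_pow, if_neg (by omega : ¬ (0 = v + m - u))]
        simp
    · have hstep : X ^ (v + m) * (X ^ (u - (v + m)) * p) = X ^ (v + m) * q := by
        rw [← mul_assoc, ← pow_add, Nat.add_sub_cancel' h, heq2]
      have h2 : X ^ (u - (v + m)) * p = q :=
        mul_left_cancel₀ (pow_ne_zero _ (X_ne_zero : (X : ℂ[X]) ≠ 0)) hstep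
      rcases Nat.eq_zero_or_pos (u - (v + m)) with h0 | h0
      · rwa [h0, pow_zero, one_mul] at h2
      · exfalso
        apply hq0
        rw [← h2, mul_coeff_zero, coeff_X_pow, if_neg (by omega : ¬ (0 = u - (v + m)))]
        simp
  -- g is a quadratic
  have hCl : (C lam : ℂ[X]) ≠ 0 := fun h => hlam0 (by simpa using congrArg (fun r => Polynomial.coeff r 0) h)
  have hmapc0 : (g.map (starRingEnd ℂ)).coeff 0 ≠ 0 := by
    rw [coeff_map]
    exact fun h => hgc0 ((starRingEnd ℂ).injective (by simpa using h))
  have hgnd2 : g.natDegree = 2 := by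
    have h4 : q.natDegree = 4 := by rw [← hpq, hpd]
    have hqd : q.natDegree = g.natDegree + g.natDegree := by
      rw [hqdef, natDegree_mul hCl (mul_ne_zero hg0 hrev0), natDegree_mul hg0 hrev0,
        natDegree_C, reverse_natDegree,
        natDegree_map_eq_of_injective (starRingEnd ℂ).injective,
        natTrailingDegree_eq_zero.mpr (Or.inr hmapc0)]
      omega
    omega
  -- notation for coefficients of g
  set a := g.coeff 2 with ha
  set b := g.coeff 1 with hb'
  set c := g.coeff 0 with hc'
  have ha0 : a ≠ 0 := by
    rw [ha, ← hgnd2]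
    exact mt leadingCoeff_eq_zero.mp hg0
  have hgrep : g = C a * X ^ 2 + C b * X + C c := by
    conv_lhs => rw [g.as_sum_range' 3 (by omega)]
    rw [Finset.sum_range_succ, Finset.sum_range_succ, Finset.sum_range_succ,
      Finset.sum_range_zero]
    simp only [← C_mul_X_pow_eq_monomial, zero_add, pow_zero, mul_one, pow_one]
    ring
  -- find the two (real) roots z, w of g
  obtain ⟨z, w, hzre, hwre, hbzw, hczw⟩ :
      ∃ z w : ℂ, z.im = 0 ∧ w.im = 0 ∧ b = -(a * (z + w)) ∧ c = a * (z * w) := by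
    have hdegpos : 0 < g.degree := by
      rw [degree_eq_natDegree hg0, hgnd2]
      norm_num
    obtain ⟨z, hz⟩ := Complex.exists_root hdegpos
    obtain ⟨h, hgh⟩ := dvd_iff_isRoot.mpr hz
    have hh0 : h ≠ 0 := fun hh => hg0 (by rw [hgh, hh, mul_zero])
    have hhnd : h.natDegree = 1 := by
      have := natDegree_mul (X_sub_C_ne_zero z) hh0
      rw [← hgh, hgnd2, natDegree_X_sub_C] at this
      omega
    have hhrep : h = C (h.coeff 1) * X + C (h.coeff 0) :=
      eq_X_add_C_of_natDegree_le_one hhnd.le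
    have hh10 : h.coeff 1 ≠ 0 := by
      have := mt leadingCoeff_eq_zero.mp hh0
      rwa [leadingCoeff, hhnd] at this
    have key : C a * X ^ 2 + C b * X + C c =
        C (h.coeff 1) * X ^ 2 + C (h.coeff 0 - z * h.coeff 1) * X + C (-(z * h.coeff 0)) := by
      rw [← hgrep]
      conv_lhs => rw [hgh, hhrep]
      simp only [map_sub, map_mul, map_neg]
      ring
    obtain ⟨hA, hB, hC⟩ := quad_eq_parts key
    have hpz : p.eval z = 0 := by
      have hgz : g.eval z = 0 := hz
      rw [hpq, hqdef]
      simp [hgz]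
    have hhw : h.eval (-(h.coeff 0) / h.coeff 1) = 0 := by
      rw [hhrep]
      simp only [eval_add, eval_mul, eval_C, eval_X]
      simp only [coeff_add, coeff_C_mul, coeff_X_one, coeff_X_zero, coeff_C_zero, coeff_C_succ, mul_one, mul_zero, add_zero, zero_add]
      field_simp
      ring
    have hgw : g.eval (-(h.coeff 0) / h.coeff 1) = 0 := by
      rw [hgh, eval_mul, hhw, mul_zero]
    have hpw : p.eval (-(h.coeff 0) / h.coeff 1) = 0 := by
      rw [hpq, hqdef]
      simp [hgw]
    refine ⟨z, -(h.coeff 0) / h.coeff 1, hreal z hpz, hreal _ hpw, ?_, ?_⟩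
    · rw [hB, hA]
      field_simp
      ring
    · rw [hC, hA]
      field_simp
  -- conjugation facts
  have hcb : (starRingEnd ℂ) b = -((starRingEnd ℂ) a * (z + w)) := by
    rw [hbzw, map_neg, map_mul, map_add,
      Complex.conj_eq_iff_im.mpr hzre, Complex.conj_eq_iff_im.mpr hwre]
  have hcc : (starRingEnd ℂ) c = (starRingEnd ℂ) a * (z * w) := by
    rw [hczw, map_mul, map_mul,
      Complex.conj_eq_iff_im.mpr hzre, Complex.conj_eq_iff_im.mpr hwre]
  -- expanded form of p
  have hrevq : (g.map (starRingEnd ℂ)).reverse =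
      C ((starRingEnd ℂ) c) * X ^ 2 + C ((starRingEnd ℂ) b) * X + C ((starRingEnd ℂ) a) := by
    rw [hgrep]
    simp only [Polynomial.map_add, Polynomial.map_mul, Polynomial.map_pow, map_C, map_X]
    exact rev_quad _ _ _ (by simpa using ha0)
  have hP2 : p = C lam * ((C a * X ^ 2 + C b * X + C c) *
      (C ((starRingEnd ℂ) c) * X ^ 2 + C ((starRingEnd ℂ) b) * X + C ((starRingEnd ℂ) a))) := by
    rw [hpq, hqdef, ← hgrep, ← hrevq]
  have hexp : C lam * ((C a * X ^ 2 + C b * X + C c) *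
      (C ((starRingEnd ℂ) c) * X ^ 2 + C ((starRingEnd ℂ) b) * X + C ((starRingEnd ℂ) a))) =
      C (lam * (a * (starRingEnd ℂ) c)) * X ^ 4
      + C (lam * (a * (starRingEnd ℂ) b + b * (starRingEnd ℂ) c)) * X ^ 3
      + C (lam * (a * (starRingEnd ℂ) a + b * (starRingEnd ℂ) b + c * (starRingEnd ℂ) c)) * X ^ 2
      + C (lam * (b * (starRingEnd ℂ) a + c * (starRingEnd ℂ) b)) * X
      + C (lam * (c * (starRingEnd ℂ) a)) := by
    simp only [map_mul, map_add]
    ring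
  have hα4 : α = lam * (a * ((starRingEnd ℂ) a * (z * w))) := by
    have h1 : α = lam * (a * (starRingEnd ℂ) c) := by
      rw [← hpc4, hP2, hexp]
      simp only [coeff_add, coeff_C_mul, coeff_X_pow, coeff_X, coeff_C]
      norm_num
    rw [h1, hcc]
  -- membership facts
  have hamem : a ∈ Algebra.adjoin ℚ ({ζ} : Set ℂ) := by
    have : g.coeff 2 = f.coeff (2 + m) := by rw [hg, coeff_X_pow_mul]
    rw [ha, this]; exact hfc _
  have hbmem : b ∈ Algebra.adjoin ℚ ({ζ} : Set ℂ) := by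
    have : g.coeff 1 = f.coeff (1 + m) := by rw [hg, coeff_X_pow_mul]
    rw [hb', this]; exact hfc _
  have hcmem : c ∈ Algebra.adjoin ℚ ({ζ} : Set ℂ) := by
    have : g.coeff 0 = f.coeff (0 + m) := by rw [hg, coeff_X_pow_mul]
    rw [hc', this]; exact hfc _
  have hcamem : (starRingEnd ℂ) a ∈ Algebra.adjoin ℚ ({ζ} : Set ℂ) := conj_mem ζ hζ a hamem
  -- reality facts
  have hAim : ((starRingEnd ℂ) a * a).im = 0 := by
    simp [Complex.mul_im, Complex.conj_re, Complex.conj_im]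
    ring
  have hBim : ((starRingEnd ℂ) a * b).im = 0 := by
    rw [hbzw]
    have hz' : z = (z.re : ℂ) := by
      apply Complex.ext <;> simp [hzre]
    have hw' : w = (w.re : ℂ) := by
      apply Complex.ext <;> simp [hwre]
    rw [hz', hw']
    simp [Complex.mul_im, Complex.mul_re, Complex.conj_re, Complex.conj_im]
    ring
  have hCim : ((starRingEnd ℂ) a * c).im = 0 := by
    rw [hczw]
    have hz' : z = (z.re : ℂ) := by
      apply Complex.ext <;> simp [hzre]
    have hw' : w = (w.re : ℂ) := by
      apply Complex.ext <;> simp [hwre]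
    rw [hz', hw']
    simp [Complex.mul_im, Complex.mul_re, Complex.conj_re, Complex.conj_im]
    ring
  have hca0 : (starRingEnd ℂ) a ≠ 0 := fun h => ha0 (by simpa using congrArg (starRingEnd ℂ) h)
  have hACne : ((starRingEnd ℂ) a * a) * ((starRingEnd ℂ) a * c) ≠ 0 :=
    mul_ne_zero (mul_ne_zero hca0 ha0) (mul_ne_zero hca0 hgc0)
  -- the real coefficients
  refine ⟨α * (((starRingEnd ℂ) a * a) * ((starRingEnd ℂ) a * c))⁻¹,
    (starRingEnd ℂ) a * a, (starRingEnd ℂ) a * b, (starRingEnd ℂ) a * c, ?_, ?_, ?_, ?_, ?_⟩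
  · constructor
    · exact mul_mem hα.1 (inv_mem' ζ hζ _
        (mul_mem (mul_mem hcamem hamem) (mul_mem hcamem hcmem)))
    · rw [← Complex.conj_eq_iff_im, map_mul, map_inv₀, map_mul, map_mul, map_mul,
        Complex.conj_eq_iff_im.mpr hα.2]
      rw [show (starRingEnd ℂ) ((starRingEnd ℂ) a) * (starRingEnd ℂ) a
          = (starRingEnd ℂ) a * a by simp [mul_comm],
        show (starRingEnd ℂ) ((starRingEnd ℂ) a) * (starRingEnd ℂ) c
          = (starRingEnd ℂ) ((starRingEnd ℂ) a * c) by rw [map_mul],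
        Complex.conj_eq_iff_im.mpr hCim]
  · exact ⟨mul_mem hcamem hamem, hAim⟩
  · exact ⟨mul_mem hcamem hbmem, hBim⟩
  · exact ⟨mul_mem hcamem hcmem, hCim⟩
  · -- the factorization identity
    apply mul_left_cancel₀
      (show (C (((starRingEnd ℂ) a * a) * ((starRingEnd ℂ) a * c)) : ℂ[X]) ≠ 0 from
        fun h => hACne (by simpa using congrArg (fun r => Polynomial.coeff r 0) h))
    rw [show C (((starRingEnd ℂ) a * a) * ((starRingEnd ℂ) a * c)) *
        (C (α * (((starRingEnd ℂ) a * a) * ((starRingEnd ℂ) a * c))⁻¹) *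
          ((C ((starRingEnd ℂ) a * a) * X ^ 2 + C ((starRingEnd ℂ) a * b) * X
            + C ((starRingEnd ℂ) a * c)) *
           (C ((starRingEnd ℂ) a * c) * X ^ 2 + C ((starRingEnd ℂ) a * b) * X
            + C ((starRingEnd ℂ) a * a))))
        = C α * ((C ((starRingEnd ℂ) a * a) * X ^ 2 + C ((starRingEnd ℂ) a * b) * X
            + C ((starRingEnd ℂ) a * c)) *
           (C ((starRingEnd ℂ) a * c) * X ^ 2 + C ((starRingEnd ℂ) a * b) * X
            + C ((starRingEnd ℂ) a * a)))
        from by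
          rw [← mul_assoc, ← C_mul]
          congr 2
          field_simp]
    rw [hP2, hα4, hcb, hcc, hbzw, hczw]
    simp only [map_mul, map_add, map_neg]
    ring
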